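/- Let Σ̂ be a symmetric d×d matrix with eigendecomposition Σ̂ = ∑_{k=1}^d λ_k v_k v_kᵀ (λ₁ ≥ … ≥ λ_d, {v_k} orthonormal). Then for γ > 0, the matrix A* = ∑_{k=1}^d max(λ_k − γ, 0) v_k v_kᵀ is a minimizer over the set S_d of positive semi-definite d×d matrices of the objective A ↦ (1/2)‖A − Σ̂‖_F² + γ·tr(A). -/

import Mathlib

theorem stmt13 {d : ℕ} (lam : Fin d → ℝ) (hlam : Antitone lam)
    (v : Fin d → (Fin d → ℝ))
    (horth : ∀ k l, dotProduct (v k) (v l) = if k = l then (1 : ℝ) else 0)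
    (Shat : Matrix (Fin d) (Fin d) ℝ)
    (hS : Shat = ∑ k, lam k • Matrix.vecMulVec (v k) (v k))
    (γ : ℝ) (hγ : 0 < γ) :
    (∑ j, max (lam j - γ) 0 • Matrix.vecMulVec (v j) (v j)).PosSemidef ∧
      ∀ A : Matrix (Fin d) (Fin d) ℝ, A.PosSemidef →
        (1 / 2) * (∑ k, ∑ l,
              ((∑ j, max (lam j - γ) 0 • Matrix.vecMulVec (v j) (v j)) k l - Shat k l) ^ 2)
            + γ * (∑ j, max (lam j - γ) 0 • Matrix.vecMulVec (v j) (v j)).trace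
          ≤ (1 / 2) * (∑ k, ∑ l, (A k l - Shat k l) ^ 2) + γ * A.trace := by
  classical
  -- entries of weighted sums of rank-one matrices
  have happ : ∀ (w : Fin d → ℝ) (k l : Fin d),
      (∑ j, w j • Matrix.vecMulVec (v j) (v j)) k l = ∑ j, w j * (v j k * v j l) := by
    intro w k l
    simp [Matrix.sum_apply, Matrix.vecMulVec_apply, mul_assoc]
  -- triple sum swapping
  have swap3 : ∀ f : Fin d → Fin d → Fin d → ℝ,
      (∑ k, ∑ l, ∑ j, f j k l) = ∑ j, ∑ k, ∑ l, f j k l := by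
    intro f
    calc (∑ k, ∑ l, ∑ j, f j k l) = ∑ k, ∑ j, ∑ l, f j k l :=
          Finset.sum_congr rfl fun k _ => Finset.sum_comm
      _ = ∑ j, ∑ k, ∑ l, f j k l := Finset.sum_comm
  have swap4 : ∀ f : Fin d → Fin d → Fin d → Fin d → ℝ,
      (∑ k, ∑ l, ∑ j, ∑ j', f j j' k l) = ∑ j, ∑ j', ∑ k, ∑ l, f j j' k l := by
    intro f
    calc (∑ k, ∑ l, ∑ j, ∑ j', f j j' k l)
        = ∑ k, ∑ j, ∑ l, ∑ j', f j j' k l :=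
          Finset.sum_congr rfl fun k _ => Finset.sum_comm
      _ = ∑ j, ∑ k, ∑ l, ∑ j', f j j' k l := Finset.sum_comm
      _ = ∑ j, ∑ k, ∑ j', ∑ l, f j j' k l :=
          Finset.sum_congr rfl fun j _ => Finset.sum_congr rfl fun k _ => Finset.sum_comm
      _ = ∑ j, ∑ j', ∑ k, ∑ l, f j j' k l :=
          Finset.sum_congr rfl fun j _ => Finset.sum_comm
  -- quadratic form of a weighted sum
  have hquad : ∀ (w : Fin d → ℝ) (x : Fin d → ℝ),
      (∑ k, ∑ l, x k * ((∑ j, w j * (v j k * v j l)) * x l))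
        = ∑ j, w j * ((∑ i, v j i * x i) * (∑ i, v j i * x i)) := by
    intro w x
    have h1 : ∀ k l, x k * ((∑ j, w j * (v j k * v j l)) * x l)
        = ∑ j, w j * ((v j k * x k) * (v j l * x l)) := by
      intro k l
      rw [Finset.sum_mul, Finset.mul_sum]
      exact Finset.sum_congr rfl fun j _ => by ring
    simp_rw [h1]
    rw [swap3]
    refine Finset.sum_congr rfl fun j _ => ?_
    rw [Finset.sum_mul_sum, Finset.mul_sum]
    exact Finset.sum_congr rfl fun k _ => (Finset.mul_sum _ _ _).symm
  -- positive semidefiniteness of weighted sums with nonnegative weights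
  have hpsd : ∀ (w : Fin d → ℝ), (∀ j, 0 ≤ w j) →
      (∑ j, w j • Matrix.vecMulVec (v j) (v j)).PosSemidef := by
    intro w hw
    refine Matrix.PosSemidef.of_dotProduct_mulVec_nonneg ?_ ?_
    · ext k l
      rw [Matrix.conjTranspose_apply, happ, happ]
      simp only [star_trivial]
      exact Finset.sum_congr rfl fun j _ => by ring
    · intro x
      have hx : star x = x := by funext i; simp
      rw [hx]
      have hcomp : dotProduct x (Matrix.mulVec (∑ j, w j • Matrix.vecMulVec (v j) (v j)) x)
          = ∑ k, ∑ l, x k * ((∑ j, w j * (v j k * v j l)) * x l) := by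
        simp only [dotProduct, Matrix.mulVec]
        refine Finset.sum_congr rfl fun k _ => ?_
        rw [Finset.mul_sum]
        refine Finset.sum_congr rfl fun l _ => ?_
        rw [happ]
      rw [hcomp, hquad]
      refine Finset.sum_nonneg fun j _ => mul_nonneg (hw j) (mul_self_nonneg _)
    -- end hpsd
  have hcnn : ∀ j, (0 : ℝ) ≤ max (lam j - γ) 0 := fun j => le_max_right _ _
  refine ⟨hpsd _ hcnn, ?_⟩
  intro A hA
  set B := ∑ j, max (lam j - γ) 0 • Matrix.vecMulVec (v j) (v j) with hBdef
  set c : Fin d → ℝ := fun j => max (lam j - γ) 0 with hcdef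
  set μ : Fin d → ℝ := fun j => c j - lam j + γ with hμdef
  have hμnn : ∀ j, 0 ≤ μ j := by
    intro j
    simp only [hμdef, hcdef]
    rcases le_or_gt (lam j) γ with h | h
    · have : max (lam j - γ) 0 = 0 := max_eq_right (by linarith)
      rw [this]; linarith
    · have : max (lam j - γ) 0 = lam j - γ := max_eq_left (by linarith)
      rw [this]; linarith
  have hcμ : ∀ j, c j * μ j = 0 := by
    intro j
    simp only [hμdef, hcdef]
    rcases le_or_gt (lam j) γ with h | h
    · have : max (lam j - γ) 0 = 0 := max_eq_right (by linarith)
      rw [this]; ring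
    · have : max (lam j - γ) 0 = lam j - γ := max_eq_left (by linarith)
      rw [this]; ring
  -- completeness of the orthonormal system
  have horth2 : ∀ i l, (∑ j, v j i * v j l) = if i = l then (1 : ℝ) else 0 := by
    have h1 : (Matrix.of v) * (Matrix.of v).transpose = 1 := by
      ext k l
      have := horth k l
      simpa [Matrix.mul_apply, Matrix.one_apply, dotProduct] using this
    have h2 : (Matrix.of v).transpose * (Matrix.of v) = 1 := mul_eq_one_comm.mp h1
    intro i l
    have h3 := congrFun (congrFun h2 i) l
    simpa [Matrix.mul_apply, Matrix.one_apply] using h3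
  -- define the "gradient" entries
  set G : Fin d → Fin d → ℝ := fun k l => ∑ j, μ j * (v j k * v j l) with hGdef
  -- G = B - Shat + γ·δ
  have hGform : ∀ k l, G k l = B k l - Shat k l + (if k = l then γ else 0) := by
    intro k l
    rw [hGdef, hBdef, hS, happ, Matrix.sum_apply]
    simp only [Matrix.smul_apply, Matrix.vecMulVec_apply, smul_eq_mul]
    have : ∀ j, μ j * (v j k * v j l)
        = (c j * (v j k * v j l) - lam j * (v j k * v j l)) + γ * (v j k * v j l) := by
      intro j; simp only [hμdef]; ring
    rw [Finset.sum_congr rfl fun j _ => this j, Finset.sum_add_distrib,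
      Finset.sum_sub_distrib, ← Finset.mul_sum, horth2]
    simp only [hcdef, mul_ite, mul_one, mul_zero]
  -- ⟨B, G⟩ = 0
  have hBG : (∑ k, ∑ l, B k l * G k l) = 0 := by
    have h1 : ∀ k l, B k l * G k l
        = ∑ j, ∑ j', (c j * μ j') * ((v j k * v j' k) * (v j l * v j' l)) := by
      intro k l
      rw [hBdef, happ, hGdef, Finset.sum_mul_sum]
      exact Finset.sum_congr rfl fun j _ => Finset.sum_congr rfl fun j' _ => by ring
    simp_rw [h1]
    rw [swap4]
    have h2 : ∀ j j', (∑ k, ∑ l, (c j * μ j') * ((v j k * v j' k) * (v j l * v j' l)))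
        = (c j * μ j') * ((∑ k, v j k * v j' k) * (∑ l, v j l * v j' l)) := by
      intro j j'
      rw [Finset.sum_mul_sum, Finset.mul_sum]
      refine Finset.sum_congr rfl fun k _ => ?_
      rw [Finset.mul_sum]
    simp_rw [h2]
    have h3 : ∀ j j', (∑ k, v j k * v j' k) = if j = j' then (1 : ℝ) else 0 := by
      intro j j'
      have := horth j j'
      simpa [dotProduct] using this
    simp_rw [h3]
    refine Finset.sum_eq_zero fun j _ => ?_
    refine Finset.sum_eq_zero fun j' _ => ?_
    by_cases h : j = j'
    · subst h; simp [hcμ j]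
    · simp [h]
  -- ⟨A, G⟩ ≥ 0
  have hAG : 0 ≤ ∑ k, ∑ l, A k l * G k l := by
    have h1 : ∀ k l, A k l * G k l = ∑ j, μ j * ((v j k * A k l) * v j l) := by
      intro k l
      rw [hGdef, Finset.mul_sum]
      exact Finset.sum_congr rfl fun j _ => by ring
    simp_rw [h1]
    rw [swap3]
    refine Finset.sum_nonneg fun j _ => ?_
    have hform : (∑ k, ∑ l, μ j * ((v j k * A k l) * v j l))
        = μ j * dotProduct (v j) (Matrix.mulVec A (v j)) := by
      simp only [dotProduct, Matrix.mulVec, Finset.mul_sum]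
      refine Finset.sum_congr rfl fun k _ => ?_
      exact Finset.sum_congr rfl fun l _ => by ring
    rw [hform]
    refine mul_nonneg (hμnn j) ?_
    have := hA.dotProduct_mulVec_nonneg (v j)
    have hx : star (v j) = v j := by funext i; simp
    rwa [hx] at this
  -- sum of squares is nonnegative
  have hQ : 0 ≤ ∑ k, ∑ l, (A k l - B k l) ^ 2 :=
    Finset.sum_nonneg fun k _ => Finset.sum_nonneg fun l _ => sq_nonneg _
  -- trace as a double sum against the scaled identity
  have htr : ∀ M : Matrix (Fin d) (Fin d) ℝ,
      γ * M.trace = ∑ k, ∑ l, M k l * (if k = l then γ else 0) := by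
    intro M
    simp only [Matrix.trace, Matrix.diag, mul_ite, mul_zero, Finset.sum_ite_eq,
      Finset.mem_univ, if_true, Finset.mul_sum]
    exact Finset.sum_congr rfl fun k _ => mul_comm _ _
  -- pointwise identity
  have key : ∀ k l,
      (1 / 2) * (A k l - Shat k l) ^ 2 + A k l * (if k = l then γ else 0)
        - ((1 / 2) * (B k l - Shat k l) ^ 2 + B k l * (if k = l then γ else 0))
      = (1 / 2) * (A k l - B k l) ^ 2 + (A k l - B k l) * G k l := by
    intro k l
    rw [hGform k l]
    ring
  -- sum the identity
  have hsum : (1 / 2) * (∑ k, ∑ l, (A k l - Shat k l) ^ 2) + γ * A.trace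
        - ((1 / 2) * (∑ k, ∑ l, (B k l - Shat k l) ^ 2) + γ * B.trace)
      = (1 / 2) * (∑ k, ∑ l, (A k l - B k l) ^ 2)
        + ((∑ k, ∑ l, A k l * G k l) - (∑ k, ∑ l, B k l * G k l)) := by
    rw [htr A, htr B]
    have hL : (∑ k, ∑ l, ((1 / 2) * (A k l - Shat k l) ^ 2 + A k l * (if k = l then γ else 0)
          - ((1 / 2) * (B k l - Shat k l) ^ 2 + B k l * (if k = l then γ else 0))))
        = ∑ k, ∑ l, ((1 / 2) * (A k l - B k l) ^ 2 + (A k l - B k l) * G k l) :=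
      Finset.sum_congr rfl fun k _ => Finset.sum_congr rfl fun l _ => key k l
    have e1 : ∀ k l, (A k l - B k l) * G k l = A k l * G k l - B k l * G k l := by
      intro k l; ring
    simp only [Finset.sum_add_distrib, Finset.sum_sub_distrib, ← Finset.mul_sum, e1] at hL
    linarith [hL]
  rw [hBG] at hsum
  linarith [hsum, hAG, hQ]
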